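/- Let r > 1 and let 1 ≤ p, q ≤ ∞ satisfy 1/p + 1/q = log₂(2^r + 2)/r. If the inequality ‖f*g‖_{ℓ^r(ℤ^d)} ≤ ‖f‖_{ℓ^p(ℤ^d)} ‖g‖_{ℓ^q(ℤ^d)} holds for every d ≥ 1 and all f, g : ℤ^d → ℝ supported in {0,1}^d, then (r + 2^{r-1})/(1 + 2^{r-1}) ≤ p, q ≤ 1 / ( log₂(2^r + 2)/r − (1 + 2^{r-1})/(r + 2^{r-1}) ). -/

import Mathlib

open scoped BigOperators ENNReal

/-- Convolution of two functions on `ℤ^d`. -/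
noncomputable def cconv {d : ℕ} (f g : (Fin d → ℤ) → ℝ) : (Fin d → ℤ) → ℝ :=
  fun m => ∑' u : Fin d → ℤ, f u * g (m - u)

/-- A point of `ℤ^d` lies in the hypercube `{0,1}^d`. -/
def InCube {d : ℕ} (x : Fin d → ℤ) : Prop := ∀ i, x i = 0 ∨ x i = 1

/-- A function on `ℤ^d` is supported in `{0,1}^d`. -/
def SupportedInCube {d : ℕ} (f : (Fin d → ℤ) → ℝ) : Prop :=
  ∀ x : Fin d → ℤ, ¬ InCube x → f x = 0

/-- The `ℓ^s` norm of a function on `ℤ^d` (for `0 < s < ∞`). -/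
noncomputable def lnorm {d : ℕ} (s : ℝ) (f : (Fin d → ℤ) → ℝ) : ℝ :=
  (∑' x : Fin d → ℤ, |f x| ^ s) ^ (1 / s)


/-- The `ℓ^s` norm for an extended exponent `s ∈ (0,∞]`:
for `s = ∞` it is the sup norm, otherwise the usual `ℓ^s` norm. -/
noncomputable def lnormE {d : ℕ} (s : ℝ≥0∞) (f : (Fin d → ℤ) → ℝ) : ℝ :=
  if s = ∞ then ⨆ x : Fin d → ℤ, |f x|
  else (∑' x : Fin d → ℤ, |f x| ^ s.toReal) ^ (1 / s.toReal)

/-! ### Auxiliary material -/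

open scoped Topology

noncomputable def wf (a b : ℝ) : ℤ → ℝ :=
  fun n => if n = 0 then a else if n = 1 then b else 0

noncomputable def vf (a b : ℝ) : (Fin 1 → ℤ) → ℝ := fun x => wf a b (x 0)

noncomputable def vg (u v w : ℝ) : ℤ → ℝ :=
  fun n => if n = 0 then u else if n = 1 then v else if n = 2 then w else 0

lemma vf_supported (a b : ℝ) : SupportedInCube (vf a b) := by
  intro x hx
  have h0 : ¬ (x 0 = 0 ∨ x 0 = 1) := by
    intro hor
    exact hx (fun i => by have : i = 0 := Subsingleton.elim _ _; rw [this]; exact hor)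
  push_neg at h0
  simp [vf, wf, h0.1, h0.2]

lemma tsum_fin1 (F : ℤ → ℝ) : ∑' x : Fin 1 → ℤ, F (x 0) = ∑' n : ℤ, F n :=
  (Equiv.funUnique (Fin 1) ℤ).tsum_eq F

lemma cconv_vf (a b c d : ℝ) (m : Fin 1 → ℤ) :
    cconv (vf a b) (vf c d) m = vg (a*c) (a*d + b*c) (b*d) (m 0) := by
  unfold cconv
  have hfun : ∀ u : Fin 1 → ℤ,
      vf a b u * vf c d (m - u)
        = (fun n : ℤ => wf a b n * wf c d (m 0 - n)) (u 0) := by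
    intro u; rfl
  rw [tsum_congr hfun, tsum_fin1 (fun n : ℤ => wf a b n * wf c d (m 0 - n))]
  rw [tsum_eq_sum (s := ({0, 1} : Finset ℤ)) ?_]
  · rw [show ({0,1} : Finset ℤ) = {0} ∪ {1} by rfl]
    rw [Finset.sum_union (by decide), Finset.sum_singleton, Finset.sum_singleton]
    have e0 : wf a b 0 = a := by simp [wf]
    have e1 : wf a b 1 = b := by simp [wf]
    rw [e0, e1]
    rcases eq_or_ne (m 0) 0 with h | h
    · have h' : m 0 - 1 ≠ 0 := by omega
      have h'' : m 0 - 1 ≠ 1 := by omega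
      simp [wf, vg, h, h', h'']
    rcases eq_or_ne (m 0) 1 with h1 | h1
    · have h' : m 0 - 1 = 0 := by omega
      simp [wf, vg, h1, h']
    rcases eq_or_ne (m 0) 2 with h2 | h2
    · have h' : m 0 - 1 = 1 := by omega
      simp [wf, vg, h, h1, h2, h']
    · have h' : m 0 - 1 ≠ 0 := by omega
      have h'' : m 0 - 1 ≠ 1 := by omega
      simp [wf, vg, h, h1, h2, h', h'']
  · intro n hn
    simp only [Finset.mem_insert, Finset.mem_singleton] at hn
    push_neg at hn
    simp [wf, hn.1, hn.2]

lemma tsum_abs_rpow_vg (s : ℝ) (hs : 0 < s) (u v w : ℝ) (hu : 0 ≤ u) (hv : 0 ≤ v) (hw : 0 ≤ w) :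
    ∑' x : Fin 1 → ℤ, |vg u v w (x 0)| ^ s = u ^ s + v ^ s + w ^ s := by
  rw [tsum_fin1 (fun n => |vg u v w n| ^ s)]
  rw [tsum_eq_sum (s := ({0, 1, 2} : Finset ℤ)) ?_]
  · rw [show ({0,1,2} : Finset ℤ) = {0} ∪ ({1} ∪ {2}) by rfl]
    rw [Finset.sum_union (by decide), Finset.sum_union (by decide)]
    simp only [Finset.sum_singleton]
    have e0 : vg u v w 0 = u := by simp [vg]
    have e1 : vg u v w 1 = v := by simp [vg]
    have e2 : vg u v w 2 = w := by simp [vg]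
    rw [e0, e1, e2, abs_of_nonneg hu, abs_of_nonneg hv, abs_of_nonneg hw]
    ring
  · intro n hn
    simp only [Finset.mem_insert, Finset.mem_singleton] at hn
    push_neg at hn
    simp [vg, hn.1, hn.2.1, hn.2.2, Real.zero_rpow hs.ne']

lemma tsum_abs_rpow_wf (s : ℝ) (hs : 0 < s) (a b : ℝ) (ha : 0 ≤ a) (hb : 0 ≤ b) :
    ∑' x : Fin 1 → ℤ, |wf a b (x 0)| ^ s = a ^ s + b ^ s := by
  rw [tsum_fin1 (fun n => |wf a b n| ^ s)]
  rw [tsum_eq_sum (s := ({0, 1} : Finset ℤ)) ?_]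
  · rw [show ({0,1} : Finset ℤ) = {0} ∪ {1} by rfl]
    rw [Finset.sum_union (by decide)]
    simp only [Finset.sum_singleton]
    have e0 : wf a b 0 = a := by simp [wf]
    have e1 : wf a b 1 = b := by simp [wf]
    rw [e0, e1, abs_of_nonneg ha, abs_of_nonneg hb]
  · intro n hn
    simp only [Finset.mem_insert, Finset.mem_singleton] at hn
    push_neg at hn
    simp [wf, hn.1, hn.2, Real.zero_rpow hs.ne']

lemma lnormE_vf (s : ℝ≥0∞) (hs : s ≠ ∞) (hst : 0 < s.toReal) (a b : ℝ)
    (ha : 0 ≤ a) (hb : 0 ≤ b) :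
    lnormE s (vf a b) = (a ^ s.toReal + b ^ s.toReal) ^ (1 / s.toReal) := by
  unfold lnormE
  rw [if_neg hs]
  congr 1
  exact tsum_abs_rpow_wf s.toReal hst a b ha hb

lemma lnorm_cconv_left (r : ℝ) (hr : 0 < r) (t : ℝ) (ht : 0 ≤ t) :
    lnorm r (cconv (vf 1 1) (vf 1 t)) = (1 + (1+t)^r + t^r)^(1/r) := by
  have hcc : cconv (vf 1 1) (vf 1 t) = fun m => vg 1 (1+t) t (m 0) := by
    funext m
    rw [cconv_vf]
    norm_num [add_comm]
  rw [hcc]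
  unfold lnorm
  rw [tsum_abs_rpow_vg r hr 1 (1+t) t zero_le_one (by linarith) ht, Real.one_rpow]

lemma lnorm_cconv_right (r : ℝ) (hr : 0 < r) (t : ℝ) (ht : 0 ≤ t) :
    lnorm r (cconv (vf 1 t) (vf 1 1)) = (1 + (1+t)^r + t^r)^(1/r) := by
  have hcc : cconv (vf 1 t) (vf 1 1) = fun m => vg 1 (1+t) t (m 0) := by
    funext m
    rw [cconv_vf]
    norm_num
  rw [hcc]
  unfold lnorm
  rw [tsum_abs_rpow_vg r hr 1 (1+t) t zero_le_one (by linarith) ht, Real.one_rpow]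

noncomputable def Gf (r q : ℝ) : ℝ → ℝ :=
  fun t => (1/q) * Real.log (1 + t ^ q) - (1/r) * Real.log (1 + (1+t) ^ r + t ^ r)

noncomputable def Gd (r q : ℝ) : ℝ → ℝ :=
  fun t => t^(q-1)/(1+t^q) - ((1+t)^(r-1)+t^(r-1))/(1+(1+t)^r+t^r)

lemma hasDerivAt_Gf (r q : ℝ) (hr : 0 < r) (hq : 0 < q) (t : ℝ) (ht : 0 < t) :
    HasDerivAt (Gf r q) (Gd r q t) t := by
  have h1t : (0:ℝ) < 1 + t := by linarith
  have htq : (0:ℝ) < 1 + t^q := by positivity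
  have htr : (0:ℝ) < 1 + (1+t)^r + t^r := by positivity
  have h1 : HasDerivAt (fun t : ℝ => t ^ q) (q * t^(q-1)) t :=
    Real.hasDerivAt_rpow_const (Or.inl ht.ne')
  have h3 : HasDerivAt (fun t : ℝ => Real.log (1 + t ^ q)) (q * t^(q-1) / (1 + t^q)) t :=
    (h1.const_add 1).log htq.ne'
  have h4 : HasDerivAt (fun t : ℝ => (1+t) ^ r) (r * (1+t)^(r-1)) t := by
    have ha : HasDerivAt (fun t : ℝ => 1 + t) 1 t := (hasDerivAt_id t).const_add 1
    have hb := (Real.hasDerivAt_rpow_const (x := 1+t) (p := r) (Or.inl h1t.ne')).comp t ha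
    simp only [mul_one] at hb; exact hb
  have h5 : HasDerivAt (fun t : ℝ => t ^ r) (r * t^(r-1)) t :=
    Real.hasDerivAt_rpow_const (Or.inl ht.ne')
  have h7 : HasDerivAt (fun t : ℝ => Real.log (1 + (1+t)^r + t^r))
      ((r * (1+t)^(r-1) + r * t^(r-1)) / (1 + (1+t)^r + t^r)) t :=
    (((h4.const_add 1).add h5)).log htr.ne'
  have hD : Gd r q t = (1/q) * (q * t^(q-1) / (1 + t^q))
      - (1/r) * ((r * (1+t)^(r-1) + r * t^(r-1)) / (1 + (1+t)^r + t^r)) := by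
    unfold Gd
    field_simp
  rw [show Gf r q = fun t => (1/q) * Real.log (1 + t ^ q)
      - (1/r) * Real.log (1 + (1+t) ^ r + t ^ r) from rfl, hD]
  exact (h3.const_mul (1/q)).sub (h7.const_mul (1/r))

lemma hasDerivAt_Gd_one (r q : ℝ) :
    HasDerivAt (Gd r q)
      (((q-1)*2 - q)/4
        - (((r-1)*2^(r-2) + (r-1))*(2+2^r) - (2^(r-1)+1)*(r*2^(r-1)+r))/(2+2^r)^2) 1 := by
  have h2r : (0:ℝ) < 2^r := Real.rpow_pos_of_pos two_pos r
  have hden1 : (1:ℝ) + 1^q ≠ 0 := by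
    have : (0:ℝ) ≤ (1:ℝ)^q := Real.rpow_nonneg one_pos.le q
    positivity
  have hden2 : (1:ℝ) + 2^r + 1^r ≠ 0 := by
    have h1 : (0:ℝ) ≤ (1:ℝ)^r := Real.rpow_nonneg one_pos.le r
    positivity
  have hn1 : HasDerivAt (fun t : ℝ => t^(q-1)) ((q-1) * 1^(q-1-1)) (1:ℝ) :=
    Real.hasDerivAt_rpow_const (Or.inl one_ne_zero)
  have hd1 : HasDerivAt (fun t : ℝ => 1 + t^q) (q * 1^(q-1)) (1:ℝ) :=
    (Real.hasDerivAt_rpow_const (Or.inl one_ne_zero)).const_add 1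
  have hq1 := hn1.div hd1 hden1
  have ha : HasDerivAt (fun t : ℝ => (1+t)^(r-1)) ((r-1) * (1+1)^(r-1-1)) (1:ℝ) := by
    have h0 : HasDerivAt (fun t : ℝ => 1 + t) 1 (1:ℝ) := (hasDerivAt_id 1).const_add 1
    have hb := (Real.hasDerivAt_rpow_const (x := (1:ℝ)+1) (p := r-1)
      (Or.inl (by norm_num))).comp (1:ℝ) h0
    simp only [mul_one] at hb; exact hb
  have hb' : HasDerivAt (fun t : ℝ => t^(r-1)) ((r-1) * 1^(r-1-1)) (1:ℝ) :=
    Real.hasDerivAt_rpow_const (Or.inl one_ne_zero)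
  have hn2 := ha.add hb'
  have hc : HasDerivAt (fun t : ℝ => (1+t)^r) (r * (1+1)^(r-1)) (1:ℝ) := by
    have h0 : HasDerivAt (fun t : ℝ => 1 + t) 1 (1:ℝ) := (hasDerivAt_id 1).const_add 1
    have hb := (Real.hasDerivAt_rpow_const (x := (1:ℝ)+1) (p := r)
      (Or.inl (by norm_num))).comp (1:ℝ) h0
    simp only [mul_one] at hb; exact hb
  have hd' : HasDerivAt (fun t : ℝ => t^r) (r * 1^(r-1)) (1:ℝ) :=
    Real.hasDerivAt_rpow_const (Or.inl one_ne_zero)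
  have hd2 : HasDerivAt (fun t : ℝ => 1 + (1+t)^r + t^r) (r * (1+1)^(r-1) + r * 1^(r-1)) (1:ℝ) :=
    (hc.const_add 1).add hd'
  have hden2' : (1:ℝ) + (1+1)^r + 1^r ≠ 0 := by
    rw [show ((1:ℝ)+1) = 2 by norm_num]; exact hden2
  have hq2 := hn2.div hd2 hden2'
  have := hq1.sub hq2
  have this' : HasDerivAt (Gd r q) _ 1 := this
  convert this' using 1
  have e1 : ((1:ℝ)+1) = 2 := by norm_num
  simp only [Real.one_rpow, e1, Pi.add_apply]
  have e2 : ((2:ℝ))^(r-1-1) = 2^(r-2) := by congr 1; ring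
  rw [e2]
  ring

lemma Gd_one (r q : ℝ) : Gd r q 1 = 0 := by
  unfold Gd
  have e1 : ((1:ℝ)+1) = 2 := by norm_num
  simp only [Real.one_rpow, e1]
  have h2r : (0:ℝ) < 2^r := Real.rpow_pos_of_pos two_pos r
  have hr1 : (2:ℝ)^r = 2^(r-1) * 2 := by
    rw [← Real.rpow_add_one (by norm_num : (2:ℝ) ≠ 0) (r-1)]
    norm_num
  rw [hr1]
  have hs : (0:ℝ) < 2^(r-1) := Real.rpow_pos_of_pos two_pos _
  field_simp
  ring

lemma gamma_eq (r q : ℝ) :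
    ((q-1)*2 - q)/4
      - (((r-1)*2^(r-2) + (r-1))*(2+2^r) - (2^(r-1)+1)*(r*2^(r-1)+r))/(2+2^r)^2
    = (q * (2^(r-1)+1) - (r + 2^(r-1))) / (4 * (2^(r-1)+1)) := by
  have hs : (0:ℝ) < 2^(r-1) := Real.rpow_pos_of_pos two_pos _
  have hr1 : (2:ℝ)^r = 2^(r-1) * 2 := by
    rw [← Real.rpow_add_one (by norm_num : (2:ℝ) ≠ 0) (r-1)]
    norm_num
  have hr2 : (2:ℝ)^(r-1) = 2^(r-2) * 2 := by
    rw [← Real.rpow_add_one (by norm_num : (2:ℝ) ≠ 0) (r-2)]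
    congr 1; ring
  have hs2 : (0:ℝ) < 2^(r-2) := Real.rpow_pos_of_pos two_pos _
  rw [hr1, hr2]
  field_simp
  ring

lemma core_lemma (r q : ℝ) (hr : 1 < r) (hq : 1 ≤ q)
    (hG : ∀ t : ℝ, 0 < t → Gf r q 1 ≤ Gf r q t) :
    (r + 2^(r-1))/(1+2^(r-1)) ≤ q := by
  by_contra hlt
  push_neg at hlt
  have hs : (0:ℝ) < 2^(r-1) := Real.rpow_pos_of_pos two_pos _
  have hs1 : (0:ℝ) < 1 + 2^(r-1) := by linarith
  have hql : q * (2^(r-1)+1) - (r + 2^(r-1)) < 0 := by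
    have := (lt_div_iff₀ hs1).mp hlt
    linarith
  have hγ : ((q-1)*2 - q)/4
      - (((r-1)*2^(r-2) + (r-1))*(2+2^r) - (2^(r-1)+1)*(r*2^(r-1)+r))/(2+2^r)^2 < 0 := by
    rw [gamma_eq r q]
    exact div_neg_of_neg_of_pos hql (by linarith)
  have hderiv1 := hasDerivAt_Gd_one r q
  have hslope := hasDerivAt_iff_tendsto_slope.mp hderiv1
  have hslope' : Filter.Tendsto (slope (Gd r q) 1) (𝓝[>] (1:ℝ)) (𝓝 _) :=
    hslope.mono_left (nhdsWithin_mono _ (fun x hx => ne_of_gt hx))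
  have hev : ∀ᶠ t in 𝓝[>] (1:ℝ), slope (Gd r q) 1 t < 0 :=
    hslope'.eventually (Filter.tendsto_id.eventually_lt_const hγ)
  obtain ⟨b, hb1, hball⟩ := mem_nhdsGT_iff_exists_Ioo_subset.mp hev
  rw [Set.mem_Ioi] at hb1
  set t0 : ℝ := (1 + b) / 2 with ht0def
  have ht01 : 1 < t0 := by simp only [ht0def]; linarith
  have ht0b : t0 < b := by simp only [ht0def]; linarith
  have hcont : ContinuousOn (Gf r q) (Set.Icc 1 t0) := fun x hx =>
    (hasDerivAt_Gf r q (by linarith) (by linarith) x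
      (by have := hx.1; linarith)).continuousAt.continuousWithinAt
  have hderiv : ∀ x ∈ Set.Ioo (1:ℝ) t0, HasDerivAt (Gf r q) (Gd r q x) x := fun x hx =>
    hasDerivAt_Gf r q (by linarith) (by linarith) x (by have := hx.1; linarith)
  obtain ⟨c, hc, hceq⟩ := exists_hasDerivAt_eq_slope (Gf r q) (Gd r q) ht01 hcont hderiv
  have hcb : c ∈ Set.Ioo (1:ℝ) b := ⟨hc.1, lt_trans hc.2 ht0b⟩
  have hslc : slope (Gd r q) 1 c < 0 := hball hcb
  rw [slope_def_field, Gd_one r q, sub_zero] at hslc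
  have hc1 : (0:ℝ) < c - 1 := by have := hc.1; linarith
  have hGdc : Gd r q c < 0 := by
    rcases div_neg_iff.mp hslc with h | h
    · linarith [h.2]
    · exact h.1
  rw [hceq] at hGdc
  have ht00 : (0:ℝ) < t0 := by linarith
  have := hG t0 ht00
  have h01 : (0:ℝ) < t0 - 1 := by linarith
  rcases div_neg_iff.mp hGdc with h | h
  · linarith [h.2]
  · linarith [h.1]

lemma test_to_G (r α β : ℝ) (hr : 1 < r) (hα : 1 ≤ α) (hβ : 1 ≤ β)
    (hc : 1/α + 1/β = Real.logb 2 (2^r+2)/r)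
    (hineq : ∀ t : ℝ, 0 < t →
      (1+(1+t)^r+t^r)^(1/r) ≤ 2^(1/α) * (1+t^β)^(1/β)) :
    ∀ t : ℝ, 0 < t → Gf r β 1 ≤ Gf r β t := by
  intro t ht
  have hr0 : (0:ℝ) < r := by linarith
  have hα0 : (0:ℝ) < α := by linarith
  have hβ0 : (0:ℝ) < β := by linarith
  have hX : (0:ℝ) < 1 + (1+t)^r + t^r := by positivity
  have hB : (0:ℝ) < 1 + t^β := by positivity
  have h2r : (0:ℝ) < 2^r := Real.rpow_pos_of_pos two_pos r
  have hlog : (1/r) * Real.log (1 + (1+t)^r + t^r)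
      ≤ (1/α) * Real.log 2 + (1/β) * Real.log (1 + t^β) := by
    have h1 := hineq t ht
    have h2 : Real.log ((1+(1+t)^r+t^r)^(1/r)) ≤ Real.log (2^(1/α) * (1+t^β)^(1/β)) := by
      apply Real.log_le_log (by positivity) h1
    rw [Real.log_rpow hX, Real.log_mul (by positivity) (by positivity),
        Real.log_rpow two_pos, Real.log_rpow hB] at h2
    linarith
  have hclog : (1/α) * Real.log 2 + (1/β) * Real.log 2 = (1/r) * Real.log (2^r+2) := by
    have h2 : (0:ℝ) < Real.log 2 := Real.log_pos (by norm_num)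
    have key : (1/α + 1/β) * Real.log 2 = Real.log (2^r+2) / r := by
      rw [hc, Real.logb]
      field_simp
    ring_nf at key ⊢
    linarith
  have hG1 : Gf r β 1 = (1/β) * Real.log 2 - (1/r) * Real.log (2^r+2) := by
    unfold Gf
    rw [Real.one_rpow, Real.one_rpow,
      show ((1:ℝ)+1) = 2 from by norm_num,
      show ((1:ℝ)+2^r+1) = 2^r+2 from by ring]
  show Gf r β 1 ≤ (1/β) * Real.log (1 + t ^ β) - (1/r) * Real.log (1 + (1+t) ^ r + t ^ r)
  rw [hG1]
  linarith

theorem young_hypercube_necessary_critical_line (r : ℝ) (hr : 1 < r)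
    (p q : ℝ≥0∞) (hp : 1 ≤ p) (hq : 1 ≤ q)
    (hpq : 1 / p + 1 / q = ENNReal.ofReal (Real.logb 2 (2 ^ r + 2) / r))
    (h : ∀ d : ℕ, 1 ≤ d → ∀ f g : (Fin d → ℤ) → ℝ,
      SupportedInCube f → SupportedInCube g →
        lnorm r (cconv f g) ≤ lnormE p f * lnormE q g) :
    ENNReal.ofReal ((r + 2 ^ (r - 1)) / (1 + 2 ^ (r - 1))) ≤ p ∧
    ENNReal.ofReal ((r + 2 ^ (r - 1)) / (1 + 2 ^ (r - 1))) ≤ q ∧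
    p ≤ ENNReal.ofReal
        (1 / (Real.logb 2 (2 ^ r + 2) / r - (1 + 2 ^ (r - 1)) / (r + 2 ^ (r - 1)))) ∧
    q ≤ ENNReal.ofReal
        (1 / (Real.logb 2 (2 ^ r + 2) / r - (1 + 2 ^ (r - 1)) / (r + 2 ^ (r - 1)))) := by
  have hr0 : (0:ℝ) < r := by linarith
  have h2r : (0:ℝ) < 2^r := Real.rpow_pos_of_pos two_pos r
  have hs : (0:ℝ) < 2^(r-1) := Real.rpow_pos_of_pos two_pos _
  set ct : ℝ := Real.logb 2 (2^r+2)/r with hctdef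
  have hct1 : 1 < ct := by
    have h1 : r < Real.logb 2 (2^r+2) := by
      rw [Real.lt_logb_iff_rpow_lt (by norm_num) (by positivity)]
      linarith
    rw [hctdef]
    exact (one_lt_div hr0).mpr h1
  have hct0 : 0 ≤ ct := by linarith
  have hp0 : p ≠ 0 := (zero_lt_one.trans_le hp).ne'
  have hq0 : q ≠ 0 := (zero_lt_one.trans_le hq).ne'
  have hoct : (1:ℝ≥0∞) < ENNReal.ofReal ct := ENNReal.one_lt_ofReal.mpr hct1
  have hpinvle : 1/p ≤ 1 := by rw [one_div]; exact ENNReal.inv_le_one.mpr hp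
  have hqinvle : 1/q ≤ 1 := by rw [one_div]; exact ENNReal.inv_le_one.mpr hq
  have hqtop : q ≠ ∞ := by
    intro hq'
    rw [hq'] at hpq
    simp only [ENNReal.div_top, add_zero] at hpq
    rw [hpq] at hpinvle
    exact absurd hpinvle (not_le.mpr hoct)
  have hptop : p ≠ ∞ := by
    intro hp'
    rw [hp'] at hpq
    simp only [ENNReal.div_top, zero_add] at hpq
    rw [hpq] at hqinvle
    exact absurd hqinvle (not_le.mpr hoct)
  set pt : ℝ := p.toReal with hptdef
  set qt : ℝ := q.toReal with hqtdef
  have hpt1 : 1 ≤ pt := by simpa using ENNReal.toReal_mono hptop hp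
  have hqt1 : 1 ≤ qt := by simpa using ENNReal.toReal_mono hqtop hq
  have hpt0 : 0 < pt := by linarith
  have hqt0 : 0 < qt := by linarith
  have hpqreal : 1/pt + 1/qt = ct := by
    have h1 := congrArg ENNReal.toReal hpq
    rw [ENNReal.toReal_add (by rw [one_div]; exact ENNReal.inv_ne_top.mpr hp0)
        (by rw [one_div]; exact ENNReal.inv_ne_top.mpr hq0),
      ENNReal.toReal_ofReal hct0] at h1
    rw [one_div, one_div, ENNReal.toReal_inv, ENNReal.toReal_inv] at h1
    rw [one_div, one_div]
    exact h1
  -- the two test inequalities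
  have hineq1 : ∀ t : ℝ, 0 < t →
      (1+(1+t)^r+t^r)^(1/r) ≤ 2^(1/pt) * (1+t^qt)^(1/qt) := by
    intro t ht
    have H := h 1 le_rfl (vf 1 1) (vf 1 t) (vf_supported 1 1) (vf_supported 1 t)
    rw [lnorm_cconv_left r hr0 t ht.le,
      lnormE_vf p hptop hpt0 1 1 zero_le_one zero_le_one,
      lnormE_vf q hqtop hqt0 1 t zero_le_one ht.le, Real.one_rpow, Real.one_rpow] at H
    rw [show (1:ℝ)+1 = 2 from by norm_num] at H
    exact H
  have hineq2 : ∀ t : ℝ, 0 < t →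
      (1+(1+t)^r+t^r)^(1/r) ≤ 2^(1/qt) * (1+t^pt)^(1/pt) := by
    intro t ht
    have H := h 1 le_rfl (vf 1 t) (vf 1 1) (vf_supported 1 t) (vf_supported 1 1)
    rw [lnorm_cconv_right r hr0 t ht.le,
      lnormE_vf q hqtop hqt0 1 1 zero_le_one zero_le_one,
      lnormE_vf p hptop hpt0 1 t zero_le_one ht.le, Real.one_rpow, Real.one_rpow] at H
    rw [show (1:ℝ)+1 = 2 from by norm_num] at H
    rw [mul_comm] at H
    exact H
  have hGq := test_to_G r pt qt hr hpt1 hqt1 hpqreal hineq1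
  have hGp := test_to_G r qt pt hr hqt1 hpt1 (by rw [add_comm]; exact hpqreal) hineq2
  have hLq : (r + 2^(r-1))/(1+2^(r-1)) ≤ qt := core_lemma r qt hr hqt1 hGq
  have hLp : (r + 2^(r-1))/(1+2^(r-1)) ≤ pt := core_lemma r pt hr hpt1 hGp
  -- bookkeeping
  have hL0 : (0:ℝ) < (r + 2^(r-1))/(1+2^(r-1)) := by positivity
  have hd0 : (0:ℝ) < ct - (1 + 2^(r-1))/(r + 2^(r-1)) := by
    have h1 : (1 + 2^(r-1))/(r + 2^(r-1)) ≤ 1 := by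
      rw [div_le_one (by linarith)]
      linarith
    linarith
  have hub : ∀ x y : ℝ, 0 < x → 0 < y → 1/x + 1/y = ct →
      (r + 2^(r-1))/(1+2^(r-1)) ≤ y →
      x ≤ 1 / (ct - (1 + 2^(r-1))/(r + 2^(r-1))) := by
    intro x y hx hy hxy hLy
    have h1 : 1/y ≤ (1 + 2^(r-1))/(r + 2^(r-1)) := by
      have := one_div_le_one_div_of_le hL0 hLy
      rwa [one_div_div] at this
    have h2 : ct - (1 + 2^(r-1))/(r + 2^(r-1)) ≤ 1/x := by linarith
    calc x = 1/(1/x) := by field_simp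
      _ ≤ 1 / (ct - (1 + 2^(r-1))/(r + 2^(r-1))) := one_div_le_one_div_of_le hd0 h2
  have hpub : pt ≤ 1 / (ct - (1 + 2^(r-1))/(r + 2^(r-1))) := hub pt qt hpt0 hqt0 hpqreal hLq
  have hqub : qt ≤ 1 / (ct - (1 + 2^(r-1))/(r + 2^(r-1))) :=
    hub qt pt hqt0 hpt0 (by rw [add_comm]; exact hpqreal) hLp
  refine ⟨?_, ?_, ?_, ?_⟩
  · calc ENNReal.ofReal ((r + 2^(r-1))/(1+2^(r-1))) ≤ ENNReal.ofReal pt :=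
        ENNReal.ofReal_le_ofReal hLp
      _ = p := ENNReal.ofReal_toReal hptop
  · calc ENNReal.ofReal ((r + 2^(r-1))/(1+2^(r-1))) ≤ ENNReal.ofReal qt :=
        ENNReal.ofReal_le_ofReal hLq
      _ = q := ENNReal.ofReal_toReal hqtop
  · calc p = ENNReal.ofReal pt := (ENNReal.ofReal_toReal hptop).symm
      _ ≤ _ := ENNReal.ofReal_le_ofReal hpub
  · calc q = ENNReal.ofReal qt := (ENNReal.ofReal_toReal hqtop).symm
      _ ≤ _ := ENNReal.ofReal_le_ofReal hqub
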